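/- arXiv:1806.03022 — 2 statements merged into one kernel-verified Lean document; each statement's English description precedes it below -/
import Mathlib

section
/- For every positive integer n and every complex number x: ∑_{k=1}^{n} binom(n, k) · (H_k^2 + H_k^{(2)}) · x^k = (1+x)^n · (H_n^2 + H_n^{(2)}) + 2 · ∑_{k=1}^{n} ((H_{k-1} − H_n)/k) · (1+x)^{n−k} − (H_n^2 + H_n^{(2)}) − 2 · ∑_{k=1}^{n} ((H_{k-1} − H_n)/k) evaluated so that the k = 0 term of the left-hand sum is excluded; equivalently, ∑_{k=0}^{n} binom(n, k) · (H_k^2 + H_k^{(2)}) · x^k = (1+x)^n · (H_n^2 + H_n^{(2)}) + 2 · ∑_{k=1}^{n} ((H_{k-1} − H_n)/k) · (1+x)^{n−k}. (This is the denominator-cleared form of the paper's identity ∑_{k=1}^{n} binom(n,k)(H_k^2 + H_k^{(2)}) x^k = (1+x)^n [H_n^2 + H_n^{(2)} + 2 ∑_{k=1}^{n} (H_{k-1} − H_n)/(k (1+x)^k)].) -/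
open Finset

/-- Generalized binomial coefficient `C(s,k) = s(s-1)⋯(s-k+1)/k!` for complex `s`. -/
noncomputable def genChoose (s : ℂ) (k : ℕ) : ℂ :=
  (∏ i ∈ Finset.range k, (s - i)) / (Nat.factorial k)

/-- The `n`-th harmonic number as a complex number. -/
noncomputable def Hc (n : ℕ) : ℂ := ∑ i ∈ Finset.range n, 1 / (i + 1)

/-- The `n`-th generalized harmonic number of order 2 as a complex number. -/
noncomputable def H2c (n : ℕ) : ℂ := ∑ i ∈ Finset.range n, 1 / ((i : ℂ) + 1) ^ 2

lemma Hc_succ (k : ℕ) : Hc (k+1) = Hc k + 1/((k:ℂ)+1) := Finset.sum_range_succ _ _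
lemma H2c_succ (k : ℕ) : H2c (k+1) = H2c k + 1/((k:ℂ)+1)^2 := Finset.sum_range_succ _ _
lemma ne0 (k : ℕ) : ((k:ℂ)+1) ≠ 0 := Nat.cast_add_one_ne_zero k

lemma pascal_sum (m : ℕ) (f : ℕ → ℂ) :
    ∑ k ∈ range (m+2), ((m+1).choose k : ℂ) * f k =
      ∑ k ∈ range (m+1), (m.choose k : ℂ) * f k +
      ∑ k ∈ range (m+1), (m.choose k : ℂ) * f (k+1) := by
  rw [Finset.sum_range_succ' (fun k => ((m+1).choose k : ℂ) * f k) (m+1),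
      Finset.sum_range_succ' (fun k => (m.choose k : ℂ) * f k) m]
  have h : ∀ k ∈ range (m+1), (((m+1).choose (k+1) : ℕ) : ℂ) * f (k+1) =
      (m.choose k : ℂ) * f (k+1) + (m.choose (k+1) : ℂ) * f (k+1) := by
    intro k _
    rw [Nat.choose_succ_succ]
    push_cast
    ring
  rw [Finset.sum_congr rfl h, Finset.sum_add_distrib,
      Finset.sum_range_succ (fun k => (m.choose (k+1) : ℂ) * f (k+1)) m]
  simp [Nat.choose_succ_self]
  ring

lemma binom_shift (m : ℕ) (x : ℂ) :
    ∑ k ∈ range (m+1), ((m+1).choose (k+1) : ℂ) * x^(k+1) = (1+x)^(m+1) - 1 := by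
  have h : (1+x)^(m+1) = ∑ k ∈ range (m+2), ((m+1).choose k : ℂ) * x^k := by
    rw [add_comm, add_pow]
    refine Finset.sum_congr rfl fun k _ => ?_
    rw [one_pow]; ring
  rw [h, Finset.sum_range_succ' (fun k => ((m+1).choose k : ℂ) * x^k) (m+1)]
  simp

lemma choose_div (m k : ℕ) :
    (m.choose k : ℂ) / ((k:ℂ)+1) = ((m+1).choose (k+1) : ℂ) / ((m:ℂ)+1) := by
  have h := Nat.add_one_mul_choose_eq m k
  have h' : ((m:ℂ)+1) * (m.choose k : ℂ) = ((m+1).choose (k+1) : ℂ) * ((k:ℂ)+1) := by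
    exact_mod_cast congrArg (Nat.cast : ℕ → ℂ) h
  rw [div_eq_div_iff (ne0 k) (ne0 m)]
  linear_combination h'

lemma hsum (m : ℕ) (x : ℂ) :
    ∑ k ∈ range (m+1), (m.choose k : ℂ) * Hc k * x^k =
      (1+x)^m * Hc m - ∑ j ∈ range m, (1+x)^(m-(j+1)) / ((j:ℂ)+1) := by
  induction m with
  | zero => simp [Hc]
  | succ m ih =>
    have hm1 : ((m:ℂ)+1) ≠ 0 := ne0 m
    have p := pascal_sum m (fun k => Hc k * x^k)
    simp only [← mul_assoc] at p
    have e1 : ∀ k ∈ range (m+1), (m.choose k : ℂ) * Hc (k+1) * x^(k+1) =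
        x * ((m.choose k : ℂ) * Hc k * x^k)
          + (((m+1).choose (k+1) : ℂ) / ((m:ℂ)+1)) * x^(k+1) := by
      intro k _
      rw [Hc_succ, ← choose_div, pow_succ]
      field_simp
    have e2 : ∑ k ∈ range (m+1), (m.choose k : ℂ) * Hc (k+1) * x^(k+1) =
        x * (∑ k ∈ range (m+1), (m.choose k : ℂ) * Hc k * x^k)
          + ((1+x)^(m+1) - 1) / ((m:ℂ)+1) := by
      rw [Finset.sum_congr rfl e1, Finset.sum_add_distrib, ← Finset.mul_sum]
      congr 1
      rw [← binom_shift m x, Finset.sum_div]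
      exact Finset.sum_congr rfl fun k _ => by ring
    have lhs_eq : ∑ k ∈ range (m+1+1), ((m+1).choose k : ℂ) * Hc k * x^k =
        (1+x) * (∑ k ∈ range (m+1), (m.choose k : ℂ) * Hc k * x^k)
          + ((1+x)^(m+1) - 1) / ((m:ℂ)+1) := by
      rw [show m+1+1 = m+2 from rfl, p, e2]; ring
    rw [lhs_eq, ih]
    rw [Finset.sum_range_succ (fun j => (1+x)^(m+1-(j+1)) / ((j:ℂ)+1)) m]
    have bump : ∀ j ∈ range m, (1+x)^(m+1-(j+1)) / ((j:ℂ)+1) =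
        (1+x) * ((1+x)^(m-(j+1)) / ((j:ℂ)+1)) := by
      intro j hj
      rw [Finset.mem_range] at hj
      have : m+1-(j+1) = (m-(j+1)) + 1 := by omega
      rw [this, pow_succ]
      ring
    rw [Finset.sum_congr rfl bump, ← Finset.mul_sum, Hc_succ]
    simp only [Nat.sub_self, pow_zero]
    field_simp
    ring

lemma main_identity (m : ℕ) (x : ℂ) :
    ∑ k ∈ range (m+1), (m.choose k : ℂ) * (Hc k ^ 2 + H2c k) * x^k =
      (1+x)^m * (Hc m ^ 2 + H2c m) +
        2 * ∑ j ∈ range m, (Hc j - Hc m)/((j:ℂ)+1) * (1+x)^(m-(j+1)) := by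
  induction m with
  | zero => simp [Hc, H2c]
  | succ m ih =>
    have hm1 : ((m:ℂ)+1) ≠ 0 := ne0 m
    have Tshift : ∑ k ∈ range (m+1), ((m+1).choose (k+1) : ℂ) * Hc (k+1) * x^(k+1) =
        (1+x)^(m+1) * Hc (m+1) - ∑ j ∈ range (m+1), (1+x)^(m-j) / ((j:ℂ)+1) := by
      have h := hsum (m+1) x
      rw [Finset.sum_range_succ' (fun k => ((m+1).choose k : ℂ) * Hc k * x^k) (m+1)] at h
      have h0 : Hc 0 = 0 := rfl
      rw [h0] at h
      simp only [mul_zero, zero_mul, add_zero, Nat.succ_sub_succ] at h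
      exact h
    have p := pascal_sum m (fun k => (Hc k ^ 2 + H2c k) * x^k)
    simp only [← mul_assoc] at p
    have e1 : ∀ k ∈ range (m+1), (m.choose k : ℂ) * (Hc (k+1) ^ 2 + H2c (k+1)) * x^(k+1) =
        x * ((m.choose k : ℂ) * (Hc k ^ 2 + H2c k) * x^k)
          + (2/((m:ℂ)+1)) * (((m+1).choose (k+1) : ℂ) * Hc (k+1) * x^(k+1)) := by
      intro k _
      have hk1 : ((k:ℂ)+1) ≠ 0 := ne0 k
      have hck : ((m+1).choose (k+1) : ℂ) = (m.choose k : ℂ) * ((m:ℂ)+1) / ((k:ℂ)+1) := by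
        have := choose_div m k
        rw [div_eq_div_iff hk1 hm1] at this
        field_simp
        linear_combination (-1 : ℂ) * this
      rw [Hc_succ, H2c_succ, pow_succ, hck]
      field_simp
      ring
    have lhs_eq : ∑ k ∈ range (m+1+1), ((m+1).choose k : ℂ) * (Hc k ^ 2 + H2c k) * x^k =
        (1+x) * (∑ k ∈ range (m+1), (m.choose k : ℂ) * (Hc k ^ 2 + H2c k) * x^k)
          + (2/((m:ℂ)+1)) * ((1+x)^(m+1) * Hc (m+1) - ∑ j ∈ range (m+1), (1+x)^(m-j) / ((j:ℂ)+1)) := by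
      rw [show m+1+1 = m+2 from rfl, p, Finset.sum_congr rfl e1, Finset.sum_add_distrib,
        ← Finset.mul_sum, ← Finset.mul_sum, Tshift]
      ring
    rw [lhs_eq, ih]
    rw [Finset.sum_range_succ (fun j => (Hc j - Hc (m+1))/((j:ℂ)+1) * (1+x)^(m+1-(j+1))) m]
    simp only [Nat.succ_sub_succ]
    have split : ∀ j ∈ range m, (Hc j - Hc (m+1))/((j:ℂ)+1) * (1+x)^(m-j) =
        (1+x) * ((Hc j - Hc m)/((j:ℂ)+1) * (1+x)^(m-(j+1)))
          - (1/((m:ℂ)+1)) * ((1+x)^(m-j) / ((j:ℂ)+1)) := by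
      intro j hj
      rw [Finset.mem_range] at hj
      have hj1 : ((j:ℂ)+1) ≠ 0 := ne0 j
      have hmj : m - j = (m-(j+1)) + 1 := by omega
      rw [Hc_succ, hmj, pow_succ]
      field_simp
      ring
    rw [Finset.sum_congr rfl split, Finset.sum_sub_distrib, ← Finset.mul_sum, ← Finset.mul_sum]
    rw [Finset.sum_range_succ (fun j => (1+x)^(m-j) / ((j:ℂ)+1)) m]
    simp only [Nat.sub_self, pow_zero]
    rw [Hc_succ, H2c_succ]
    field_simp
    ring

theorem stmt_15 (n : ℕ) (hn : 0 < n) (x : ℂ) :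
    ∑ k ∈ Finset.range (n + 1), (Nat.choose n k : ℂ) * (Hc k ^ 2 + H2c k) * x ^ k =
      (1 + x) ^ n * (Hc n ^ 2 + H2c n) +
        2 * ∑ k ∈ Finset.Icc 1 n, (Hc (k - 1) - Hc n) / k * (1 + x) ^ (n - k) := by
  have hIcc : ∑ k ∈ Finset.Icc 1 n, (Hc (k - 1) - Hc n) / (k : ℂ) * (1 + x) ^ (n - k) =
      ∑ j ∈ range n, (Hc j - Hc n)/((j:ℂ)+1) * (1+x)^(n-(j+1)) := by
    rw [show Finset.Icc 1 n = Finset.Ico 1 (n+1) by rw [Finset.Ico_add_one_right_eq_Icc],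
      Finset.sum_Ico_eq_sum_range]
    refine Finset.sum_congr (by norm_num) fun j _ => ?_
    have h1 : 1 + j - 1 = j := by omega
    have h2 : n - (1 + j) = n - (j + 1) := by omega
    rw [h1, h2]
    push_cast
    ring
  rw [hIcc]
  exact main_identity n x
end

section
/- For all positive integers m and n: ∑_{k=0}^{n} (-1)^k · binom(mn, k) · H_{mn−k} = ((-1)^n / m) · binom(mn, n) · ( (m−1) · H_{(m−1)n} − 1/(mn) ), as an identity of rational numbers. -/
/-- The `n`-th harmonic number as a rational number. -/
def Hq (n : ℕ) : ℚ := ∑ i ∈ Finset.range n, 1 / (i + 1)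

/-- The `n`-th generalized harmonic number of order 2 as a rational number. -/
def H2q (n : ℕ) : ℚ := ∑ i ∈ Finset.range n, 1 / ((i : ℚ) + 1) ^ 2

lemma Hq_succ (k : ℕ) : Hq (k+1) = Hq k + 1/((k:ℚ)+1) := by
  simp [Hq, Finset.sum_range_succ]

lemma key (N n : ℕ) (h : n < N) :
    ∑ k ∈ Finset.range (n+1), (-1:ℚ)^k * ((N.choose k : ℕ) : ℚ) * Hq (N - k)
      = (-1:ℚ)^n * (((N-1).choose n : ℕ) : ℚ) *
        (Hq (N - n) - n / ((N:ℚ) * ((N:ℚ) - n))) := by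
  induction n with
  | zero => simp
  | succ n ih =>
    rw [Finset.sum_range_succ, ih (Nat.lt_of_succ_lt h)]
    obtain ⟨a, ha⟩ : ∃ a, N = n + 1 + (a + 1) := by
      obtain ⟨b, hb⟩ := Nat.exists_eq_add_of_lt h
      exact ⟨b, by omega⟩
    subst ha
    have h1 : n + 1 + (a + 1) - n = a + 2 := by omega
    have h2 : n + 1 + (a + 1) - (n + 1) = a + 1 := by omega
    have h3 : n + 1 + (a + 1) - 1 = n + (a + 1) := by omega
    rw [h1, h2, h3, Hq_succ (a+1)]
    have hc : ((n + (a+1)).choose (n+1) : ℚ) * (n+1) = ((n + (a+1)).choose n : ℚ) * (a+1) := by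
      have := Nat.choose_succ_right_eq (n + (a+1)) n
      have h4 : n + (a+1) - n = a + 1 := by omega
      rw [h4] at this
      exact_mod_cast congrArg (Nat.cast : ℕ → ℚ) this
    have hcc : ((n+1+(a+1)).choose (n+1) : ℚ)
        = ((n + (a+1)).choose n : ℚ) + ((n + (a+1)).choose (n+1) : ℚ) := by
      have : (n+1+(a+1)).choose (n+1) = (n + (a+1)).choose n + (n + (a+1)).choose (n+1) := by
        have := Nat.choose_succ_succ' (n + (a+1)) n
        simpa [Nat.succ_eq_add_one, show n + (a+1) + 1 = n+1+(a+1) by ring] using this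
      exact_mod_cast congrArg (Nat.cast : ℕ → ℚ) this
    push_cast
    rw [hcc]
    have hn1 : ((n:ℚ) + 1) ≠ 0 := by positivity
    have hc2 : ((n + (a+1)).choose (n+1) : ℚ)
        = ((n + (a+1)).choose n : ℚ) * ((a:ℚ)+1) / ((n:ℚ)+1) := by
      field_simp
      linarith [hc]
    rw [hc2]
    have hN : ((n:ℚ) + 1 + ((a:ℚ)+1)) ≠ 0 := by positivity
    have hA : ((a:ℚ) + 1) ≠ 0 := by positivity
    have hA2 : ((a:ℚ) + 2) ≠ 0 := by positivity
    have hB : (n:ℚ) + 1 + ((a:ℚ) + 1) - (n:ℚ) ≠ 0 := by intro hh; exact hA2 (by linarith)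
    field_simp [hB]
    ring


theorem stmt_16 (m n : ℕ) (hm : 0 < m) (hn : 0 < n) :
    ∑ k ∈ Finset.range (n + 1), (-1 : ℚ) ^ k * (Nat.choose (m * n) k : ℚ) * Hq (m * n - k) =
      (-1 : ℚ) ^ n / m * (Nat.choose (m * n) n : ℚ) *
        (((m : ℚ) - 1) * Hq ((m - 1) * n) - 1 / ((m : ℚ) * n)) := by
  rcases eq_or_lt_of_le (Nat.succ_le_of_lt hm) with h1 | h2
  · -- m = 1
    obtain rfl : m = 1 := h1.symm
    obtain ⟨p, rfl⟩ : ∃ p, n = p + 1 := ⟨n - 1, by omega⟩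
    rw [Finset.sum_range_succ]
    have e0 : 1 * (p + 1) - (p + 1) = 0 := by omega
    have e1 : (1 : ℕ) * (p + 1) = p + 1 := by omega
    have e2 : (1 - 1) * (p + 1) = 0 := by omega
    rw [e0, e1, e2]
    have hk := key (p + 1) p (by omega)
    have e3 : p + 1 - p = 1 := by omega
    have e4 : p + 1 - 1 = p := by omega
    rw [e3, e4, Nat.choose_self] at hk
    rw [hk]
    have hq1 : Hq 1 = 1 := by norm_num [Hq]
    have hq0 : Hq 0 = 0 := by simp [Hq]
    rw [hq1, hq0]
    have hp : ((p : ℚ) + 1) ≠ 0 := by positivity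
    push_cast
    field_simp
    ring_nf
    simp
  · -- m ≥ 2
    have hlt : n < m * n := by nlinarith
    have hk := key (m * n) n hlt
    have esub : m * n - n = (m - 1) * n := by
      rw [Nat.sub_mul, one_mul]
    rw [esub] at hk
    rw [hk]
    -- relation: (m*n) * C(mn-1, n) = (mn - n) * C(mn, n)
    have hrel : ((m * n : ℕ) : ℚ) * (((m * n - 1).choose n : ℕ) : ℚ)
        = (((m - 1) * n : ℕ) : ℚ) * (((m * n).choose n : ℕ) : ℚ) := by
      have hA := Nat.choose_succ_right_eq (m * n) n
      have hmn : m * n - 1 + 1 = m * n := by omega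
      have hB : m * n * ((m * n - 1).choose n) = (m * n).choose (n + 1) * (n + 1) := by
        have := Nat.add_one_mul_choose_eq (m * n - 1) n
        simpa [Nat.succ_eq_add_one, hmn] using this
      have hnat : m * n * ((m * n - 1).choose n) = ((m - 1) * n) * ((m * n).choose n) := by
        rw [hB, hA, esub, Nat.mul_comm]
      exact_mod_cast congrArg (Nat.cast : ℕ → ℚ) hnat
    have hm0 : ((m : ℚ)) ≠ 0 := by positivity
    have hn0 : ((n : ℚ)) ≠ 0 := by
      exact (Nat.cast_pos.mpr hn).ne'
    have hmn0 : ((m * n : ℕ) : ℚ) ≠ 0 := by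
      push_cast; positivity
    have hm1n : (((m - 1) * n : ℕ) : ℚ) ≠ 0 := by
      have : 0 < (m - 1) * n := by
        have : 1 ≤ m - 1 := by omega
        exact Nat.mul_pos (by omega) hn
      exact_mod_cast this.ne'
    have hcastm : ((m - 1 : ℕ) : ℚ) = (m : ℚ) - 1 := by
      push_cast [Nat.cast_sub hm]; ring
    have hcast2 : (((m - 1) * n : ℕ) : ℚ) = ((m : ℚ) - 1) * n := by
      push_cast [Nat.cast_sub hm]; ring
    have hsubc : ((m * n : ℕ) : ℚ) - (n : ℚ) = (((m - 1) * n : ℕ) : ℚ) := by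
      rw [hcast2]; push_cast; ring
    have hc' : (((m * n - 1).choose n : ℕ) : ℚ)
        = (((m - 1) * n : ℕ) : ℚ) * (((m * n).choose n : ℕ) : ℚ) / ((m * n : ℕ) : ℚ) := by
      rw [eq_div_iff hmn0]
      linear_combination hrel
    rw [hc']
    rw [show ((m * n : ℕ) : ℚ) * (((m * n : ℕ) : ℚ) - (n : ℚ))
        = ((m * n : ℕ) : ℚ) * (((m - 1) * n : ℕ) : ℚ) by rw [hsubc]]
    rw [hcast2]
    push_cast [Nat.cast_sub hm]
    have hm1 : ((m : ℚ) - 1) ≠ 0 := by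
      have : (2 : ℚ) ≤ m := by exact_mod_cast h2
      linarith
    field_simp
end
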